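/- Let n, d, t ≥ 1 be integers and v ∈ M_{n,d,t}. The initial t-spread lexsegment L^i_t(v) is a t-spread strongly stable set: for every ω ∈ L^i_t(v), every index j with x_j dividing ω, and every index i < j such that x_i(ω/x_j) ∈ M_{n,d,t}, one has x_i(ω/x_j) ∈ L^i_t(v). -/

import Mathlib

open MvPolynomial

/-- A degree-`d` `t`-spread monomial of `K[x_1,…,x_n]`, recorded by its weakly increasing
(1-based) sequence of variable indices `idx 0 ≤ idx 1 ≤ ⋯` with consecutive gaps at least `t`.
For `t ≥ 1` these are exactly the `t`-spread monomials `x_{i_1}⋯x_{i_d}` with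
`i_{j+1} - i_j ≥ t`, and for `t = 0` all monomials of degree `d` (written with sorted indices). -/
structure SpreadMono (n d t : ℕ) where
  idx : Fin d → ℕ
  one_le : ∀ j, 1 ≤ idx j
  le_n : ∀ j, idx j ≤ n
  spread : ∀ (j : Fin d) (h : (j : ℕ) + 1 < d), idx j + t ≤ idx ⟨(j : ℕ) + 1, h⟩

namespace SpreadMono

variable {n d t : ℕ}

/-- The (0-based) variable of `Fin n` corresponding to the `j`-th (1-based) index. -/
def var (u : SpreadMono n d t) (j : Fin d) : Fin n :=
  ⟨u.idx j - 1, by have h1 := u.one_le j; have h2 := u.le_n j; omega⟩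

/-- The exponent vector of the monomial `x_{i_1}⋯x_{i_d}`. -/
noncomputable def expVec (u : SpreadMono n d t) : Fin n →₀ ℕ :=
  ∑ j, Finsupp.single (u.var j) 1

/-- The monomial `x_{i_1}⋯x_{i_d}` as an element of `MvPolynomial (Fin n) K`. -/
noncomputable def toMvPoly (K : Type*) [Field K] (u : SpreadMono n d t) :
    MvPolynomial (Fin n) K :=
  MvPolynomial.monomial u.expVec 1

/-- Strict lexicographic order on index sequences. -/
def seqLT (f g : Fin d → ℕ) : Prop :=
  ∃ s : Fin d, (∀ j, j < s → f j = g j) ∧ f s < g s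

/-- Lexicographic order (≤) on index sequences. -/
def seqLE (f g : Fin d → ℕ) : Prop := f = g ∨ seqLT f g

/-- `u ≥_slex v`: a monomial is `slex`-larger iff its index sequence is lex-smaller. -/
def slexGE (u v : SpreadMono n d t) : Prop := seqLE u.idx v.idx

/-- `u >_slex v`. -/
def slexGT (u v : SpreadMono n d t) : Prop := seqLT u.idx v.idx

/-- The `t`-spread lexsegment `L_t(u,v) = {w : u ≥_slex w ≥_slex v}`. -/
def lexseg (u v : SpreadMono n d t) : Set (SpreadMono n d t) :=
  {w | slexGE u w ∧ slexGE w v}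

/-- The initial `t`-spread lexsegment `L^i_t(v) = {w : w ≥_slex v}`. -/
def initialSeg (v : SpreadMono n d t) : Set (SpreadMono n d t) :=
  {w | slexGE w v}

/-- The final `t`-spread lexsegment `L^f_t(u) = {w : w ≤_slex u}`. -/
def finalSeg (u : SpreadMono n d t) : Set (SpreadMono n d t) :=
  {w | slexGE u w}

/-- The ideal of `MvPolynomial (Fin n) K` generated by a set of spread monomials. -/
noncomputable def idealOf (K : Type*) [Field K] (A : Set (SpreadMono n d t)) :
    Ideal (MvPolynomial (Fin n) K) :=
  Ideal.span ((fun w => toMvPoly K w) '' A)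

end SpreadMono

/-- `a ≤_lex b` for exponent vectors of monomials of `K[x_1,…,x_m]`, for the lexicographic
order with `x_1 > x_2 > ⋯ > x_m`: either `a = b`, or at the first position where they
differ `b` has the larger exponent. -/
def monoLE {m : ℕ} (a b : Fin m →₀ ℕ) : Prop :=
  a = b ∨ ∃ i : Fin m, (∀ j, j < i → a j = b j) ∧ a i < b i

open SpreadMono


section Aux
variable {n d t : ℕ}

namespace SpreadMono

lemma idx_strictMono' (ht : 1 ≤ t) (u : SpreadMono n d t) : StrictMono u.idx := by
  have key : ∀ b, ∀ hb : b < d, ∀ a, ∀ ha : a < b, u.idx ⟨a, ha.trans hb⟩ < u.idx ⟨b, hb⟩ := by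
    intro b
    induction b with
    | zero => intro hb a ha; exact absurd ha (Nat.not_lt_zero a)
    | succ b ih =>
      intro hb a ha
      have hb' : b < d := lt_trans (Nat.lt_succ_self b) hb
      have hstep : u.idx ⟨b, hb'⟩ + t ≤ u.idx ⟨b + 1, hb⟩ := u.spread ⟨b, hb'⟩ hb
      rcases Nat.lt_succ_iff_lt_or_eq.mp ha with h | h
      · exact lt_trans (ih hb' a h) (by omega)
      · subst h; omega
  intro a b hab
  have := key b b.isLt a hab
  simpa using this

lemma var_mono' (ht : 1 ≤ t) (u : SpreadMono n d t) : Monotone u.var := by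
  intro a b hab
  have := (idx_strictMono' ht u).monotone hab
  have h1 := u.one_le a
  simp only [var, Fin.mk_le_mk]
  omega

/-- counting variables ≤ x -/
noncomputable def cnt (u : SpreadMono n d t) (x : Fin n) : ℕ :=
  (Finset.univ.filter fun j => u.var j ≤ x).card

lemma sum_expVec (u : SpreadMono n d t) (x : Fin n) :
    ∑ y ∈ Finset.Iic x, u.expVec y = cnt u x := by
  unfold expVec cnt
  simp only [Finsupp.finset_sum_apply]
  rw [Finset.sum_comm]
  rw [Finset.card_filter]
  refine Finset.sum_congr rfl fun j _ => ?_
  rw [Finset.sum_congr rfl (fun y _ => Finsupp.single_apply (a := u.var j) (b := (1:ℕ)) (a' := y))]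
  rw [Finset.sum_ite_eq]
  simp [Finset.mem_Iic]

end SpreadMono

end Aux

section Aux2
variable {n d t : ℕ}
lemma seqLE_trans' {f g h : Fin d → ℕ} (h1 : SpreadMono.seqLE f g) (h2 : SpreadMono.seqLE g h) :
    SpreadMono.seqLE f h := by
  rcases h1 with rfl | ⟨s1, e1, l1⟩
  · exact h2
  rcases h2 with rfl | ⟨s2, e2, l2⟩
  · exact Or.inr ⟨s1, e1, l1⟩
  rcases lt_trichotomy s1 s2 with hlt | rfl | hgt
  · exact Or.inr ⟨s1, fun j hj => (e1 j hj).trans (e2 j (hj.trans hlt)),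
      l1.trans_le (e2 s1 hlt).le⟩
  · exact Or.inr ⟨s1, fun j hj => (e1 j hj).trans (e2 j hj), l1.trans l2⟩
  · exact Or.inr ⟨s2, fun j hj => (e1 j (hj.trans hgt)).trans (e2 j hj),
      (e1 s2 hgt) ▸ l2⟩

lemma seqLE_of_pointwise {f g : Fin d → ℕ} (h : ∀ j, f j ≤ g j) : SpreadMono.seqLE f g := by
  by_cases he : f = g
  · exact Or.inl he
  · have hex : ∃ j, f j ≠ g j := by
      by_contra hc; push_neg at hc; exact he (funext hc)
    obtain ⟨j0, hj0⟩ := hex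
    have hS : (Finset.univ.filter fun j => f j ≠ g j).Nonempty := ⟨j0, by simp [hj0]⟩
    refine Or.inr ⟨(Finset.univ.filter fun j => f j ≠ g j).min' hS, ?_, ?_⟩
    · intro j hj
      by_contra hne
      have hmem : j ∈ Finset.univ.filter fun j => f j ≠ g j := by simp [hne]
      exact absurd (Finset.min'_le _ j hmem) (not_le.mpr hj)
    · have hmem := Finset.min'_mem _ hS
      have hne : f (Finset.min' _ hS) ≠ g (Finset.min' _ hS) := by
        simpa using hmem
      exact lt_of_le_of_ne (h _) hne

end Aux2

/-- **(Initial lexsegments are `t`-spread strongly stable).** Let `v ∈ M_{n,d,t}`. For every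
`ω ∈ L^i_t(v)`, every `j` with `x_j ∣ ω`, and every `i < j` such that
`x_i(ω/x_j) ∈ M_{n,d,t}`, one has `x_i(ω/x_j) ∈ L^i_t(v)`. Here `x_j` runs through the
variables dividing `ω` (`j = ω.idx p`), `i` is a variable index (0-based `i : Fin n`, so
`i < j` reads `(i : ℕ) + 1 < ω.idx p`), and `x_i(ω/x_j)` is encoded by its exponent vector. -/
theorem stmt11 (n d t : ℕ) (hn : 1 ≤ n) (hd : 1 ≤ d) (ht : 1 ≤ t)
    (v : SpreadMono n d t) (w : SpreadMono n d t) (hw : w ∈ initialSeg v)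
    (p : Fin d) (i : Fin n) (hij : (i : ℕ) + 1 < w.idx p)
    (w' : SpreadMono n d t)
    (hw' : w'.expVec = w.expVec - Finsupp.single (w.var p) 1 + Finsupp.single i 1) :
    w' ∈ initialSeg v := by
  set a := w.var p with ha_def
  have hia : i ≤ a := by
    have h1 := w.one_le p
    simp only [ha_def, var, Fin.le_def]
    omega
  have hsingle : ∀ (b : Fin n) (x : Fin n),
      ∑ y ∈ Finset.Iic x, (Finsupp.single b (1:ℕ)) y = if b ≤ x then 1 else 0 := by
    intro b x
    rw [Finset.sum_congr rfl fun y _ => Finsupp.single_apply (a := b) (b := (1:ℕ)) (a' := y)]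
    rw [Finset.sum_ite_eq]
    simp [Finset.mem_Iic]
  have hcnt : ∀ x : Fin n, cnt w x ≤ cnt w' x := by
    intro x
    have h1 : cnt w' x
        = ∑ y ∈ Finset.Iic x, ((w.expVec - Finsupp.single a 1 : Fin n →₀ ℕ)) y
          + ∑ y ∈ Finset.Iic x, (Finsupp.single i (1:ℕ)) y := by
      rw [← sum_expVec, ← Finset.sum_add_distrib]
      exact Finset.sum_congr rfl fun y _ => by rw [hw', Finsupp.add_apply]
    have hle : ∀ y ∈ Finset.Iic x, (Finsupp.single a (1:ℕ)) y ≤ w.expVec y := by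
      intro y _
      rcases eq_or_ne a y with rfl | hne
      · rw [Finsupp.single_eq_same]
        have : (Finsupp.single (w.var p) (1:ℕ)) (w.var p)
            ≤ ∑ j, (Finsupp.single (w.var j) (1:ℕ)) (w.var p) :=
          Finset.single_le_sum (f := fun j => (Finsupp.single (w.var j) (1:ℕ)) (w.var p))
            (fun j _ => Nat.zero_le _) (Finset.mem_univ p)
        simp only [Finsupp.single_eq_same] at this
        calc (1:ℕ) ≤ ∑ j, (Finsupp.single (w.var j) (1:ℕ)) (w.var p) := this
          _ = w.expVec (w.var p) := by
              rw [expVec, Finsupp.finset_sum_apply]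
      · rw [Finsupp.single_eq_of_ne' hne]; exact Nat.zero_le _
    have h2 : ∑ y ∈ Finset.Iic x, ((w.expVec - Finsupp.single a 1 : Fin n →₀ ℕ)) y
        = cnt w x - ∑ y ∈ Finset.Iic x, (Finsupp.single a (1:ℕ)) y := by
      rw [← sum_expVec, Finset.sum_congr rfl fun y _ => Finsupp.tsub_apply w.expVec (Finsupp.single a 1) y]
      exact Finset.sum_tsub_distrib _ hle
    have hpa : (if a ≤ x then (1:ℕ) else 0) ≤ cnt w x := by
      split_ifs with hax
      · exact Finset.card_pos.mpr ⟨p, by simp [cnt, ha_def ▸ hax]⟩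
      · exact Nat.zero_le _
    have hmono : (if a ≤ x then (1:ℕ) else 0) ≤ (if i ≤ x then 1 else 0) := by
      split_ifs with ha1 ha2
      · omega
      · exact absurd (le_trans hia ha1) ha2
      · omega
      · omega
    rw [h1, h2, hsingle a x, hsingle i x]
    omega
  have hpt : ∀ j, w'.idx j ≤ w.idx j := by
    intro j
    have hc1 : (j : ℕ) + 1 ≤ cnt w (w.var j) := by
      have hsub : Finset.Iic j ⊆ Finset.univ.filter fun q => w.var q ≤ w.var j := by
        intro q hq
        simp only [Finset.mem_filter, Finset.mem_univ, true_and]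
        exact var_mono' ht w (Finset.mem_Iic.mp hq)
      calc (j : ℕ) + 1 = (Finset.Iic j).card := (Fin.card_Iic j).symm
        _ ≤ _ := Finset.card_le_card hsub
    have hc2 := le_trans hc1 (hcnt (w.var j))
    by_contra hlt
    push_neg at hlt
    have hall : ∀ q, w'.var q ≤ w.var j → q < j := by
      intro q hq
      by_contra hqj
      push_neg at hqj
      have h3 : w'.var j ≤ w.var j := le_trans (var_mono' ht w' hqj) hq
      have h1 := w'.one_le j; have h2 := w.one_le j
      simp only [var, Fin.le_def] at h3
      omega
    have hsub2 : (Finset.univ.filter fun q => w'.var q ≤ w.var j) ⊆ Finset.Iio j := by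
      intro q hq
      simp only [Finset.mem_filter, Finset.mem_univ, true_and] at hq
      exact Finset.mem_Iio.mpr (hall q hq)
    have hcard := Finset.card_le_card hsub2
    rw [Fin.card_Iio] at hcard
    have : cnt w' (w.var j) ≤ (j : ℕ) := hcard
    omega
  exact seqLE_trans' (seqLE_of_pointwise hpt) hw
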